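/- arXiv:2510.05937 — 5 statements merged into one kernel-verified Lean document; each statement's English description precedes it below -/
import Mathlib

section
/- Let (X, d) be a metric space, let S = S₁ ∪ S₂ be a finite subset of X with S₁ and S₂ disjoint, let k₁, k₂ be natural numbers with k = k₁ + k₂, let r* ≥ 0, and suppose there exists C* ⊆ S with |C* ∩ S₁| ≤ k₁, |C* ∩ S₂| ≤ k₂, and d(s, C*) ≤ r* for every s ∈ S. Fix l ∈ {1, 2} and let l' denote the other index. Let Γ_l ⊆ S_l be a 2r*-independent center set of S_l, let Γ_{l'} ⊆ S_{l'} be a 2r*-independent center set of S_{l'} with |Γ_{l'}| ≤ k_{l'}, let Γ_l' = { i ∈ Γ_l : d(i, Γ_{l'}) > 3·r* }, and let C = Γ_l' ∪ Γ_{l'}. Then: (1) |Γ_l'| ≤ k_l, |Γ_{l'}| ≤ k_{l'}, and |C| ≤ k; and (2) every s ∈ S satisfies d(s, C) ≤ 5·r*. -/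
/-- Theorem 1 (correctness of the procession of Case (2)).
The two groups are indexed by `Fin 2`; `l' = l + 1` is the other index. -/
theorem case_two_correctness
    {X : Type*} [MetricSpace X] [DecidableEq X]
    (S Γ : Fin 2 → Finset X) (k : Fin 2 → ℕ) (rstar : ℝ)
    (Cstar : Finset X) (l : Fin 2) (Γl' : Finset X)
    (hr : 0 ≤ rstar)
    (hdisj : Disjoint (S 0) (S 1))
    (hCsub : Cstar ⊆ S 0 ∪ S 1)
    (hCfair : ∀ i : Fin 2, (Cstar ∩ S i).card ≤ k i)
    (hCcover : ∀ s ∈ S 0 ∪ S 1, ∃ c ∈ Cstar, dist s c ≤ rstar)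
    -- `Γ i` is a `2r*`-independent center set of `S i`, for each `i`
    (hΓsub : ∀ i : Fin 2, Γ i ⊆ S i)
    (hΓsep : ∀ i : Fin 2, ∀ p ∈ Γ i, ∀ q ∈ Γ i, p ≠ q → 2 * rstar < dist p q)
    (hΓcover : ∀ i : Fin 2, ∀ p ∈ S i, ∃ q ∈ Γ i, dist p q ≤ 2 * rstar)
    -- the other group's set is small enough: `|Γ_{l'}| ≤ k_{l'}`
    (hother : (Γ (l + 1)).card ≤ k (l + 1))
    -- `Γ_l' = { i ∈ Γ_l : d(i, Γ_{l'}) > 3r* }`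
    (hΓl' : ∀ x : X, x ∈ Γl' ↔ x ∈ Γ l ∧ ∀ q ∈ Γ (l + 1), 3 * rstar < dist x q) :
    Γl'.card ≤ k l ∧ (Γ (l + 1)).card ≤ k (l + 1) ∧
      (Γl' ∪ Γ (l + 1)).card ≤ k 0 + k 1 ∧
      ∀ s ∈ S 0 ∪ S 1, ∃ c ∈ Γl' ∪ Γ (l + 1), dist s c ≤ 5 * rstar := by
  classical
  -- membership in S l ∪ S (l+1) equals membership in S 0 ∪ S 1
  have hcases : ∀ s : X, s ∈ S 0 ∪ S 1 → s ∈ S l ∨ s ∈ S (l + 1) := by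
    intro s hs
    rw [Finset.mem_union] at hs
    fin_cases l
    · simpa using hs
    · simpa using hs.symm
  have hSsub : ∀ i : Fin 2, S i ⊆ S 0 ∪ S 1 := by
    intro i
    fin_cases i
    · exact Finset.subset_union_left
    · exact Finset.subset_union_right
  -- Claim A : Γl'.card ≤ k l
  have key : ∀ x ∈ Γl', ∃ c ∈ Cstar ∩ S l, dist x c ≤ rstar := by
    intro x hx
    obtain ⟨hxΓ, hxfar⟩ := (hΓl' x).1 hx
    obtain ⟨c, hcC, hcd⟩ := hCcover x (hSsub l (hΓsub l hxΓ))
    refine ⟨c, Finset.mem_inter.2 ⟨hcC, ?_⟩, hcd⟩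
    rcases hcases c (hCsub hcC) with h | h
    · exact h
    · exfalso
      obtain ⟨q, hqΓ, hqd⟩ := hΓcover (l + 1) c h
      have := hxfar q hqΓ
      have : dist x q ≤ dist x c + dist c q := dist_triangle x c q
      linarith [hxfar q hqΓ]
  choose f hf1 hf2 using key
  have hA : Γl'.card ≤ k l := by
    have hcard := Finset.card_le_card_of_injOn
      (s := Γl'.attach) (t := Cstar ∩ S l)
      (fun p : {x // x ∈ Γl'} => f p.1 p.2)
      (fun p _ => hf1 p.1 p.2)
      (by
        intro x _ y _ hxy
        by_contra hne
        have hne' : (x : X) ≠ (y : X) := fun h => hne (Subtype.ext h)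
        have hxΓ := ((hΓl' x).1 x.2).1
        have hyΓ := ((hΓl' y).1 y.2).1
        have hsep := hΓsep l x hxΓ y hyΓ hne'
        have h1 := hf2 x.1 x.2
        have h2 := hf2 y.1 y.2
        have : dist (x : X) (y : X) ≤ dist (x : X) (f x.1 x.2) + dist (f y.1 y.2) (y : X) := by
          calc dist (x : X) (y : X) ≤ dist (x : X) (f x.1 x.2) + dist (f x.1 x.2) (y : X) :=
            dist_triangle _ _ _
          _ = dist (x : X) (f x.1 x.2) + dist (f y.1 y.2) (y : X) := by
            simp only at hxy; rw [hxy]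
        rw [dist_comm (f y.1 y.2) (y : X)] at this
        linarith)
    have hattach : Γl'.attach.card = Γl'.card := Finset.card_attach
    calc Γl'.card = Γl'.attach.card := hattach.symm
    _ ≤ (Cstar ∩ S l).card := hcard
    _ ≤ k l := hCfair l
  refine ⟨hA, hother, ?_, ?_⟩
  · have := Finset.card_union_le Γl' (Γ (l + 1))
    have hk : k l + k (l + 1) = k 0 + k 1 := by
      fin_cases l <;> simp <;> ring
    omega
  · intro s hs
    rcases hcases s hs with h | h
    · obtain ⟨p, hpΓ, hpd⟩ := hΓcover l s h
      by_cases hp : p ∈ Γl'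
      · exact ⟨p, Finset.mem_union_left _ hp, by linarith⟩
      · -- p fails the far condition
        rw [hΓl'] at hp
        push_neg at hp
        obtain ⟨q, hqΓ, hqd⟩ := hp hpΓ
        refine ⟨q, Finset.mem_union_right _ hqΓ, ?_⟩
        calc dist s q ≤ dist s p + dist p q := dist_triangle _ _ _
        _ ≤ 5 * rstar := by linarith
    · obtain ⟨q, hqΓ, hqd⟩ := hΓcover (l + 1) s h
      exact ⟨q, Finset.mem_union_right _ hqΓ, by linarith⟩
end

section
/- Let (X, d) be a metric space, let S = S₁ ∪ S₂ be a finite subset of X with S₁ and S₂ disjoint, let k₂ ∈ ℕ, let r* ≥ 0, and suppose there exists C* ⊆ S with |C* ∩ S₂| ≤ k₂ and d(s, C*) ≤ r* for every s ∈ S. Let Γ₁ ⊆ S₁ be such that every point s ∈ S₁ satisfies d(s, Γ₁) ≤ 2·r*, and let Γ₂ ⊆ S₂ be a set in which any two distinct points are at distance greater than 2·r* and such that every q ∈ Γ₂ satisfies d(q, Γ₁) > 3·r*. Then |Γ₂| ≤ k₂. -/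
/-- Condition (2) of Lemma 5: every point of `Γ₂` lies in an optimal cluster
centered at a point of `S₂`, hence `|Γ₂| ≤ k₂`. -/
theorem semi_structured_gamma2_size
    {X : Type*} [MetricSpace X] [DecidableEq X]
    (S₁ S₂ Γ₁ Γ₂ Cstar : Finset X) (k₂ : ℕ) (rstar : ℝ)
    (hr : 0 ≤ rstar)
    (hdisj : Disjoint S₁ S₂)
    (hCsub : Cstar ⊆ S₁ ∪ S₂)
    (hCfair₂ : (Cstar ∩ S₂).card ≤ k₂)
    (hCcover : ∀ s ∈ S₁ ∪ S₂, ∃ c ∈ Cstar, dist s c ≤ rstar)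
    (hΓ₁sub : Γ₁ ⊆ S₁)
    (hΓ₁cover : ∀ s ∈ S₁, ∃ q ∈ Γ₁, dist s q ≤ 2 * rstar)
    (hΓ₂sub : Γ₂ ⊆ S₂)
    (hΓ₂sep : ∀ p ∈ Γ₂, ∀ q ∈ Γ₂, p ≠ q → 2 * rstar < dist p q)
    (hΓ₂far : ∀ q ∈ Γ₂, ∀ g ∈ Γ₁, 3 * rstar < dist q g) :
    Γ₂.card ≤ k₂ := by
  classical
  set f : X → X := fun q =>
    if h : ∃ c ∈ Cstar, dist q c ≤ rstar then h.choose else q with hf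
  have hmem : ∀ q ∈ Γ₂, f q ∈ Cstar ∧ dist q (f q) ≤ rstar := by
    intro q hq
    have hqS : q ∈ S₁ ∪ S₂ := Finset.mem_union_right _ (hΓ₂sub hq)
    have h := hCcover q hqS
    simp only [hf, dif_pos h]
    obtain ⟨hc1, hc2⟩ := h.choose_spec
    exact ⟨hc1, hc2⟩
  have hfS₂ : ∀ q ∈ Γ₂, f q ∈ Cstar ∩ S₂ := by
    intro q hq
    obtain ⟨hc, hd⟩ := hmem q hq
    refine Finset.mem_inter.2 ⟨hc, ?_⟩
    rcases Finset.mem_union.1 (hCsub hc) with h1 | h2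
    · exfalso
      obtain ⟨g, hg, hdg⟩ := hΓ₁cover (f q) h1
      have := hΓ₂far q hq g hg
      have : dist q g ≤ 3 * rstar :=
        calc dist q g ≤ dist q (f q) + dist (f q) g := dist_triangle _ _ _
          _ ≤ rstar + 2 * rstar := add_le_add hd hdg
          _ = 3 * rstar := by ring
      linarith [hΓ₂far q hq g hg]
    · exact h2
  have hinj : Set.InjOn f Γ₂ := by
    intro p hp q hq hpq
    by_contra hne
    have := hΓ₂sep p hp q hq hne
    have h1 := (hmem p hp).2
    have h2 := (hmem q hq).2
    have : dist p q ≤ 2 * rstar :=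
      calc dist p q ≤ dist p (f p) + dist (f p) q := dist_triangle _ _ _
        _ = dist p (f p) + dist q (f q) := by rw [hpq, dist_comm (f q) q]
        _ ≤ rstar + rstar := add_le_add h1 h2
        _ = 2 * rstar := by ring
    linarith [hΓ₂sep p hp q hq hne]
  calc Γ₂.card ≤ (Cstar ∩ S₂).card :=
        Finset.card_le_card_of_injOn f hfS₂ hinj
    _ ≤ k₂ := hCfair₂
end

section
/- Let (X, d) be a metric space, let S = S₁ ∪ S₂ be a finite subset of X with S₁ and S₂ disjoint, let k₁ ∈ ℕ, let r* ≥ 0, and suppose there exists C* ⊆ S with |C* ∩ S₁| ≤ k₁ and d(s, C*) ≤ r* for every s ∈ S. Let Γ ⊆ S₁ be a set in which any two distinct points are at distance greater than 2·r*. Then there exists a subset Γ'' ⊆ Γ with |Γ \ Γ''| ≤ k₁ such that every point c ∈ Γ'' is within distance r* of some point of C* ∩ S₂ (in particular, within distance r* of some point of S₂). -/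
/-- Core of Condition (3) of Lemma 5: at most `k₁` points of `Γ` lie in optimal
clusters centered at points of `S₁`; the remaining points `Γ''` admit
replacement points of `C* ∩ S₂` at distance at most `r*`. -/
theorem semi_structured_replacement_exists
    {X : Type*} [MetricSpace X] [DecidableEq X]
    (S₁ S₂ Γ Cstar : Finset X) (k₁ : ℕ) (rstar : ℝ)
    (hr : 0 ≤ rstar)
    (hdisj : Disjoint S₁ S₂)
    (hCsub : Cstar ⊆ S₁ ∪ S₂)
    (hCfair₁ : (Cstar ∩ S₁).card ≤ k₁)
    (hCcover : ∀ s ∈ S₁ ∪ S₂, ∃ c ∈ Cstar, dist s c ≤ rstar)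
    (hΓsub : Γ ⊆ S₁)
    (hΓsep : ∀ p ∈ Γ, ∀ q ∈ Γ, p ≠ q → 2 * rstar < dist p q) :
    ∃ Γ'' ⊆ Γ, (Γ \ Γ'').card ≤ k₁ ∧
      ∀ c ∈ Γ'', ∃ p ∈ Cstar ∩ S₂, dist c p ≤ rstar := by
  classical
  set Γ'' : Finset X := Γ.filter (fun c => ∃ p ∈ Cstar ∩ S₂, dist c p ≤ rstar) with hΓ''
  refine ⟨Γ'', Finset.filter_subset _ _, ?_, fun c hc => (Finset.mem_filter.mp hc).2⟩
  -- each point of Γ \ Γ'' has its covering center in Cstar ∩ S₁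
  have hcen : ∀ c ∈ Γ \ Γ'', ∃ p ∈ Cstar ∩ S₁, dist c p ≤ rstar := by
    intro c hc
    rw [Finset.mem_sdiff] at hc
    obtain ⟨hcΓ, hcn⟩ := hc
    obtain ⟨p, hpC, hpd⟩ := hCcover c (Finset.mem_union_left _ (hΓsub hcΓ))
    rcases Finset.mem_union.mp (hCsub hpC) with h1 | h2
    · exact ⟨p, Finset.mem_inter.mpr ⟨hpC, h1⟩, hpd⟩
    · exact absurd (Finset.mem_filter.mpr ⟨hcΓ, p, Finset.mem_inter.mpr ⟨hpC, h2⟩, hpd⟩) hcn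
  choose f hf hfd using hcen
  let g : X → X := fun c => if h : c ∈ Γ \ Γ'' then f c h else c
  have hg : ∀ c (h : c ∈ Γ \ Γ''), g c = f c h := fun c h => dif_pos h
  have : (Γ \ Γ'').card ≤ (Cstar ∩ S₁).card := by
    apply Finset.card_le_card_of_injOn g (fun a ha => (hg a ha) ▸ hf a ha)
    intro a ha b hb hab'
    rw [hg a ha, hg b hb] at hab'
    have hab := hab'
    by_contra hne
    have haΓ : a ∈ Γ := (Finset.mem_sdiff.mp ha).1
    have hbΓ : b ∈ Γ := (Finset.mem_sdiff.mp hb).1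
    have := hΓsep a haΓ b hbΓ hne
    have : dist a b ≤ 2 * rstar := by
      calc dist a b ≤ dist a (f a ha) + dist (f a ha) b := dist_triangle _ _ _
        _ = dist a (f a ha) + dist b (f b hb) := by rw [hab, dist_comm (f b hb) b]
        _ ≤ rstar + rstar := add_le_add (hfd a ha) (hfd b hb)
        _ = 2 * rstar := by ring
    linarith
  exact this.trans hCfair₁
end

section
/- Let (X, d) be a metric space, let S = S₁ ∪ S₂ be a finite subset of X with S₁ and S₂ disjoint, let k₁ ∈ ℕ, let r* ≥ 0, and suppose there exists C* ⊆ S with |C* ∩ S₁| ≤ k₁ and d(s, C*) ≤ r* for every s ∈ S. Let Γ₁ ⊆ S₁ be a 2r*-independent center set of S₁, and let σ be a function assigning to every point c ∈ Γ₁ that is within distance r* of some point of S₂ a point σ(c) ∈ S₂ with d(c, σ(c)) ≤ r*. Then there exists a subset Γ'' ⊆ Γ₁, consisting of points on which σ is defined, such that the set C₁ = (Γ₁ \ Γ'') ∪ σ(Γ'') satisfies |C₁ ∩ S₁| ≤ k₁ and d(s, C₁) ≤ 3·r* for every s ∈ S₁. -/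
/-- Condition (3) of Lemma 5 combined with the replacement-covering step of the
3-approximation for semi-structured streams (`m = 2`): excess points of `Γ₁`
can be traded for replacement points in `S₂`, yielding a set `C₁` that covers
`S₁` within radius `3r*` while respecting the group-1 fairness bound. -/
theorem semi_structured_three_approx_group1
    {X : Type*} [MetricSpace X] [DecidableEq X]
    (S₁ S₂ Γ₁ Cstar : Finset X) (k₁ : ℕ) (rstar : ℝ) (σ : X → X)
    (hr : 0 ≤ rstar)
    (hdisj : Disjoint S₁ S₂)
    (hCsub : Cstar ⊆ S₁ ∪ S₂)
    (hCfair₁ : (Cstar ∩ S₁).card ≤ k₁)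
    (hCcover : ∀ s ∈ S₁ ∪ S₂, ∃ c ∈ Cstar, dist s c ≤ rstar)
    -- `Γ₁` is a `2r*`-independent center set of `S₁`
    (hΓsub : Γ₁ ⊆ S₁)
    (hΓsep : ∀ p ∈ Γ₁, ∀ q ∈ Γ₁, p ≠ q → 2 * rstar < dist p q)
    (hΓcover : ∀ s ∈ S₁, ∃ q ∈ Γ₁, dist s q ≤ 2 * rstar)
    -- `σ` assigns to every point of `Γ₁` within distance `r*` of `S₂`
    -- a point of `S₂` at distance at most `r*`
    (hσ : ∀ c ∈ Γ₁, (∃ p ∈ S₂, dist c p ≤ rstar) →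
      σ c ∈ S₂ ∧ dist c (σ c) ≤ rstar) :
    ∃ Γ'' ⊆ Γ₁, (∀ c ∈ Γ'', ∃ p ∈ S₂, dist c p ≤ rstar) ∧
      (((Γ₁ \ Γ'') ∪ Γ''.image σ) ∩ S₁).card ≤ k₁ ∧
      ∀ s ∈ S₁, ∃ c ∈ (Γ₁ \ Γ'') ∪ Γ''.image σ, dist s c ≤ 3 * rstar := by
  classical
  set Γ'' := Γ₁.filter (fun c => ∃ p ∈ S₂, dist c p ≤ rstar) with hΓ''
  refine ⟨Γ'', Finset.filter_subset _ _, fun c hc => (Finset.mem_filter.mp hc).2, ?_, ?_⟩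
  · -- cardinality bound
    -- choice function for nearest optimal center
    set f : X → X := fun c => if h : c ∈ S₁ ∪ S₂ then (hCcover c h).choose else c with hf
    have hfprop : ∀ c ∈ Γ₁, f c ∈ Cstar ∧ dist c (f c) ≤ rstar := by
      intro c hc
      have h : c ∈ S₁ ∪ S₂ := Finset.mem_union_left _ (hΓsub hc)
      simp only [hf, dif_pos h]
      exact ⟨(hCcover c h).choose_spec.1, (hCcover c h).choose_spec.2⟩
    have himg : (Γ''.image σ) ∩ S₁ = ∅ := by
      apply Finset.eq_empty_of_forall_notMem
      intro x hx
      obtain ⟨hx1, hx2⟩ := Finset.mem_inter.mp hx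
      obtain ⟨c, hc, rfl⟩ := Finset.mem_image.mp hx1
      have hcΓ := (Finset.mem_filter.mp hc).1
      have := (hσ c hcΓ (Finset.mem_filter.mp hc).2).1
      exact (Finset.disjoint_left.mp hdisj hx2) this
    have hsub : ((Γ₁ \ Γ'') ∪ Γ''.image σ) ∩ S₁ ⊆ Γ₁ \ Γ'' := by
      intro x hx
      obtain ⟨hx1, hx2⟩ := Finset.mem_inter.mp hx
      rcases Finset.mem_union.mp hx1 with h | h
      · exact h
      · exact absurd (Finset.mem_inter.mpr ⟨h, hx2⟩) (by simp [himg])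
    refine le_trans (Finset.card_le_card hsub) (le_trans ?_ hCfair₁)
    apply Finset.card_le_card_of_injOn f
    · intro c hc
      obtain ⟨hc1, hc2⟩ := Finset.mem_sdiff.mp hc
      obtain ⟨hfC, hfd⟩ := hfprop c hc1
      refine Finset.mem_inter.mpr ⟨hfC, ?_⟩
      rcases Finset.mem_union.mp (hCsub hfC) with h | h
      · exact h
      · exact absurd (Finset.mem_filter.mpr ⟨hc1, f c, h, hfd⟩) hc2
    · intro a ha b hb hab
      by_contra hne
      have ha1 := (Finset.mem_sdiff.mp ha).1
      have hb1 := (Finset.mem_sdiff.mp hb).1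
      have := hΓsep a ha1 b hb1 hne
      have hd : dist a b ≤ 2 * rstar := by
        calc dist a b ≤ dist a (f a) + dist (f b) b := by
              rw [hab]; exact dist_triangle a (f b) b
          _ ≤ rstar + rstar := add_le_add (hfprop a ha1).2
              (dist_comm (f b) b ▸ (hfprop b hb1).2)
          _ = 2 * rstar := by ring
      linarith
  · -- coverage
    intro s hs
    obtain ⟨q, hq, hdq⟩ := hΓcover s hs
    by_cases hq'' : q ∈ Γ''
    · obtain ⟨hσ1, hσ2⟩ := hσ q hq (Finset.mem_filter.mp hq'').2
      refine ⟨σ q, Finset.mem_union_right _ (Finset.mem_image_of_mem σ hq''), ?_⟩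
      calc dist s (σ q) ≤ dist s q + dist q (σ q) := dist_triangle _ _ _
        _ ≤ 2 * rstar + rstar := add_le_add hdq hσ2
        _ = 3 * rstar := by ring
    · exact ⟨q, Finset.mem_union_left _ (Finset.mem_sdiff.mpr ⟨hq, hq''⟩),
        by linarith⟩
end

section
/- Let (X, d) be a metric space, let S = S₁ ∪ S₂ be a finite subset of X with S₁ and S₂ disjoint, let k₁, k₂ ∈ ℕ, let r* ≥ 0, and suppose there exists C* ⊆ S with |C* ∩ S₁| ≤ k₁, |C* ∩ S₂| ≤ k₂, and d(s, C*) ≤ r* for every s ∈ S. Fix l ∈ {1, 2} and let l' denote the other index. Let Γ_{l'} ⊆ S_{l'} be such that every point s ∈ S_{l'} satisfies d(s, Γ_{l'}) ≤ 2·r*, and let D ⊆ S_l be a set in which any two distinct points are at distance greater than 2·r* and such that every i ∈ D satisfies d(i, Γ_{l'}) > 3·r*. Then |D| ≤ k_l. -/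
/-- Lemma 3: points of group `l` that are pairwise more than `2r*` apart and at
distance more than `3r*` from a `2r*`-covering set `Γ` of the other group can
only be served by optimal centers lying in `S l`, hence their number is at most
`k l`. The two groups are indexed by `Fin 2`; `l + 1` is the other index. -/
theorem degree_zero_points_card_le
    {X : Type*} [MetricSpace X] [DecidableEq X]
    (S : Fin 2 → Finset X) (k : Fin 2 → ℕ) (rstar : ℝ)
    (Cstar Γ D : Finset X) (l : Fin 2)
    (hr : 0 ≤ rstar)
    (hdisj : Disjoint (S 0) (S 1))
    (hCsub : Cstar ⊆ S 0 ∪ S 1)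
    (hCfair : ∀ i : Fin 2, (Cstar ∩ S i).card ≤ k i)
    (hCcover : ∀ s ∈ S 0 ∪ S 1, ∃ c ∈ Cstar, dist s c ≤ rstar)
    (hΓsub : Γ ⊆ S (l + 1))
    (hΓcover : ∀ s ∈ S (l + 1), ∃ q ∈ Γ, dist s q ≤ 2 * rstar)
    (hDsub : D ⊆ S l)
    (hDsep : ∀ p ∈ D, ∀ q ∈ D, p ≠ q → 2 * rstar < dist p q)
    (hDfar : ∀ i ∈ D, ∀ g ∈ Γ, 3 * rstar < dist i g) :
    D.card ≤ k l := by
  classical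
  have hmem : ∀ i : X, ∃ c : X, i ∈ D → c ∈ Cstar ∩ S l ∧ dist i c ≤ rstar := by
    intro i
    by_cases hi : i ∈ D
    · have hiS : i ∈ S 0 ∪ S 1 := by
        have := hDsub hi
        fin_cases l <;> simp_all [Finset.mem_union]
      obtain ⟨c, hc, hdc⟩ := hCcover i hiS
      refine ⟨c, fun _ => ⟨Finset.mem_inter.mpr ⟨hc, ?_⟩, hdc⟩⟩
      have hcS : c ∈ S 0 ∪ S 1 := hCsub hc
      by_contra hcl
      have hcl' : c ∈ S (l + 1) := by
        fin_cases l <;> simp_all [Finset.mem_union]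
      obtain ⟨g, hg, hdg⟩ := hΓcover c hcl'
      have h3 := hDfar i hi g hg
      have : dist i g ≤ 3 * rstar := by
        calc dist i g ≤ dist i c + dist c g := dist_triangle _ _ _
          _ ≤ rstar + 2 * rstar := add_le_add hdc hdg
          _ = 3 * rstar := by ring
      linarith
    · exact ⟨i, fun h => absurd h hi⟩
  choose f hf using hmem
  have hcard : D.card ≤ (Cstar ∩ S l).card := by
    apply Finset.card_le_card_of_injOn f (fun a ha => (hf a ha).1)
    intro a ha b hb hab
    by_contra hne
    have hsep := hDsep a (by simpa using ha) b (by simpa using hb) hne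
    have hda := (hf a (by simpa using ha)).2
    have hdb := (hf b (by simpa using hb)).2
    have : dist a b ≤ dist a (f a) + dist (f b) b := by
      rw [hab]; exact dist_triangle _ _ _
    rw [dist_comm (f b) b] at this
    linarith
  exact hcard.trans (hCfair l)
end
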